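/- Let S be a numerical semigroup and u an element of the MED closure of S. Let S_u be the numerical semigroup generated by S ∪ {u}. Then MED(S_u) = MED(S). -/

import Mathlib

/-- A numerical semigroup: an additive submonoid of ℕ with finite complement. -/
structure NumSgp where
  carrier : Set ℕ
  zero_mem : 0 ∈ carrier
  add_mem : ∀ ⦃a b : ℕ⦄, a ∈ carrier → b ∈ carrier → a + b ∈ carrier
  cofinite : carrierᶜ.Finite

/-- The multiplicity: the smallest nonzero element. -/
noncomputable def NumSgp.mult (S : NumSgp) : ℕ := sInf {n | n ∈ S.carrier ∧ n ≠ 0}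

/-- The Apéry set of `S` with respect to `s`: elements `x ∈ S` with `x - s ∉ S`
(over the integers, i.e. there is no `y ∈ S` with `y + s = x`). -/
def NumSgp.Ap (S : NumSgp) (s : ℕ) : Set ℕ :=
  {x | x ∈ S.carrier ∧ ∀ y ∈ S.carrier, y + s ≠ x}

/-- `z` is an Arf element of `S`. -/
def NumSgp.ArfElem (S : NumSgp) (z : ℕ) : Prop :=
  ∀ x ∈ S.carrier, ∀ y ∈ S.carrier, z ≤ x → z ≤ y → x + y - z ∈ S.carrier

/-- The minimal generating set: nonzero elements not expressible as a sum of two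
nonzero elements of `S`. -/
def NumSgp.minGen (S : NumSgp) : Set ℕ :=
  {x | x ∈ S.carrier ∧ x ≠ 0 ∧ ∀ a ∈ S.carrier, ∀ b ∈ S.carrier, a ≠ 0 → b ≠ 0 → a + b ≠ x}

/-- The embedding dimension: the cardinality of the minimal generating set. -/
noncomputable def NumSgp.edim (S : NumSgp) : ℕ := S.minGen.ncard

/-- The Frobenius number: the largest gap. -/
noncomputable def NumSgp.frob (S : NumSgp) : ℕ := sSup S.carrierᶜ

/-- The conductor: the smallest `c` with `c + ℤ≥0 ⊆ S`. -/
noncomputable def NumSgp.cond (S : NumSgp) : ℕ := sInf {c | ∀ n, c ≤ n → n ∈ S.carrier}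

/-- The genus: the number of gaps. -/
noncomputable def NumSgp.genus (S : NumSgp) : ℕ := S.carrierᶜ.ncard

/-- The set of pseudo-Frobenius numbers. -/
def NumSgp.PF (S : NumSgp) : Set ℕ :=
  {x | x ∉ S.carrier ∧ ∀ s ∈ S.carrier, s ≠ 0 → x + s ∈ S.carrier}

/-- The type of `S`: the number of pseudo-Frobenius numbers. -/
noncomputable def NumSgp.type (S : NumSgp) : ℕ := S.PF.ncard

/-- `S` is a MED semigroup: its multiplicity is an Arf element, i.e. for all
`x, y ∈ S` with `x, y ≥ m(S)`, `x + y - m(S) ∈ S`. -/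
def NumSgp.IsMED (S : NumSgp) : Prop := S.ArfElem S.mult

/-- The MED closure of `S`: the intersection of all MED numerical semigroups
containing `S` with the same multiplicity. -/
def NumSgp.MEDclosure (S : NumSgp) : Set ℕ :=
  ⋂ T ∈ {T : NumSgp | S.carrier ⊆ T.carrier ∧ T.mult = S.mult ∧ T.IsMED}, T.carrier

/-- The multiplicity is a nonzero element of `S`. -/
lemma NumSgp.mult_mem (S : NumSgp) : S.mult ∈ S.carrier ∧ S.mult ≠ 0 := by
  have hne : {n | n ∈ S.carrier ∧ n ≠ 0}.Nonempty := by
    have hinf : S.carrier.Infinite := by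
      have := S.cofinite
      have : S.carrierᶜᶜ.Infinite := Set.Finite.infinite_compl this
      simpa using this
    obtain ⟨n, hn, hn0⟩ := (hinf.diff (Set.finite_singleton 0)).nonempty
    exact ⟨n, hn, by simpa using hn0⟩
  exact Nat.sInf_mem hne

lemma NumSgp.mult_le (S : NumSgp) {n : ℕ} (hn : n ∈ S.carrier) (hn0 : n ≠ 0) :
    S.mult ≤ n := Nat.sInf_le ⟨hn, hn0⟩

/-- The "ordinary" semigroup {0} ∪ [m, ∞). -/
noncomputable def ordSgp (m : ℕ) (hm : m ≠ 0) : NumSgp where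
  carrier := {n | n = 0 ∨ m ≤ n}
  zero_mem := Or.inl rfl
  add_mem := by
    rintro a b (rfl | ha) (rfl | hb) <;> simp_all <;> omega
  cofinite := by
    apply Set.Finite.subset (Set.finite_Iio m)
    intro n hn
    simp only [Set.mem_compl_iff, Set.mem_setOf_eq, not_or] at hn
    exact lt_of_not_ge hn.2

lemma ordSgp_mult (m : ℕ) (hm : m ≠ 0) : (ordSgp m hm).mult = m := by
  apply le_antisymm
  · exact Nat.sInf_le ⟨Or.inr le_rfl, hm⟩
  · have := (ordSgp m hm).mult_mem
    rcases this.1 with h | h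
    · exact absurd h this.2
    · exact h

lemma ordSgp_isMED (m : ℕ) (hm : m ≠ 0) : (ordSgp m hm).IsMED := by
  intro x hx y hy hxm hym
  rw [ordSgp_mult m hm] at hxm hym ⊢
  right; omega

lemma S_subset_ord (S : NumSgp) : S.carrier ⊆ (ordSgp S.mult S.mult_mem.2).carrier := by
  intro s hs
  rcases eq_or_ne s 0 with rfl | hs0
  · exact Or.inl rfl
  · exact Or.inr (S.mult_le hs hs0)

theorem med_closure_adjoin (S : NumSgp) (u : ℕ) (hu : u ∈ S.MEDclosure)
    (Su : NumSgp) (hSu : Su.carrier = ↑(AddSubmonoid.closure (S.carrier ∪ {u}))) :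
    Su.MEDclosure = S.MEDclosure := by
  have hm0 : S.mult ≠ 0 := S.mult_mem.2
  -- u is 0 or ≥ mult S
  have hu' : u ∈ (ordSgp S.mult hm0).carrier := by
    have := Set.mem_iInter₂.1 hu (ordSgp S.mult hm0)
    exact this ⟨S_subset_ord S, ordSgp_mult S.mult hm0, ordSgp_isMED S.mult hm0⟩
  -- S ⊆ Su
  have hSsub : S.carrier ⊆ Su.carrier := by
    intro s hs
    rw [hSu]
    exact AddSubmonoid.subset_closure (Set.mem_union_left _ hs)
  -- every nonzero element of Su is ≥ mult S
  have hge : ∀ x ∈ Su.carrier, x = 0 ∨ S.mult ≤ x := by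
    intro x hx
    rw [hSu] at hx
    induction hx using AddSubmonoid.closure_induction with
    | mem z hz =>
      rcases hz with hz | hz
      · rcases eq_or_ne z 0 with rfl | hz0
        · exact Or.inl rfl
        · exact Or.inr (S.mult_le hz hz0)
      · simp only [Set.mem_singleton_iff] at hz
        subst hz
        exact hu'
    | zero => exact Or.inl rfl
    | add a b _ _ ha hb => rcases ha with rfl | ha <;> rcases hb with rfl | hb <;> omega
  have hmultSu : Su.mult = S.mult := by
    apply le_antisymm
    · exact Nat.sInf_le ⟨hSsub S.mult_mem.1, hm0⟩
    · have := Su.mult_mem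
      rcases hge _ this.1 with h | h
      · exact absurd h this.2
      · exact h
  ext x
  simp only [NumSgp.MEDclosure, Set.mem_iInter, Set.mem_setOf_eq, and_imp]
  constructor
  · intro h T hST hmT hMED
    have huT : u ∈ T.carrier := by
      have := Set.mem_iInter₂.1 hu T
      exact this ⟨hST, hmT, hMED⟩
    have hSuT : Su.carrier ⊆ T.carrier := by
      rw [hSu]
      have : AddSubmonoid.closure (S.carrier ∪ {u}) ≤
          ⟨⟨T.carrier, fun ha hb => T.add_mem ha hb⟩, T.zero_mem⟩ := by
        rw [AddSubmonoid.closure_le]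
        rintro z (hz | hz)
        · exact hST hz
        · simp only [Set.mem_singleton_iff] at hz; subst hz; exact huT
      exact this
    exact h T hSuT (by rw [hmT, hmultSu]) hMED
  · intro h T hSuT hmT hMED
    exact h T (hSsub.trans hSuT) (by rw [hmT, hmultSu]) hMED
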